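/- Let 0 < α < 1/M, β > 0 and d ∈ ℝ^N with d_m > 0 for all m, and let x̂^∞ be the fixed point of the map x ↦ F(x) − β d. Set d̲ = min_{m=1,…,N} d_m, x̄_0 = max{ x̂_{1,0}, …, x̂_{N,0}, 0 }, and λ = 1 − min{ 2α/(1 − αM + 2α), β d̲ / ( x̄_0 − log(α/(1 − αM + α)) + β d̲ ) }. Then 0 ≤ λ < 1, and the reference dynamical system satisfies ‖x̂_i − x̂^∞‖_∞ ≤ λ · ‖x̂_{i−1} − x̂^∞‖_∞ for every i ≥ 1. -/

import Mathlib

namespace abHMMaux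

noncomputable def phi (c a E S : ℝ) : ℝ := Real.log ((c * E + a * (1 + S)) / (c + a * (1 + S)))

lemma num_pos {c a E S : ℝ} (hc : 0 < c) (ha : 0 < a) (hE : 0 < E) (hS : 0 ≤ S) :
    0 < c * E + a * (1 + S) := by positivity

lemma den_pos {c a S : ℝ} (hc : 0 < c) (ha : 0 < a) (hS : 0 ≤ S) :
    0 < c + a * (1 + S) := by positivity

lemma phi_mono_E {c a S E₁ E₂ : ℝ} (hc : 0 < c) (ha : 0 < a) (hS : 0 ≤ S)
    (h1 : 0 < E₁) (h12 : E₁ ≤ E₂) : phi c a E₁ S ≤ phi c a E₂ S := by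
  have hD := den_pos (S := S) hc ha hS
  apply Real.log_le_log (by positivity)
  gcongr

lemma phi_mono_S {c a E S₁ S₂ : ℝ} (hc : 0 < c) (ha : 0 < a) (hE0 : 0 < E) (hE : E ≤ 1)
    (hS1 : 0 ≤ S₁) (h : S₁ ≤ S₂) : phi c a E S₁ ≤ phi c a E S₂ := by
  have hS2 : (0:ℝ) ≤ S₂ := le_trans hS1 h
  apply Real.log_le_log (div_pos (num_pos hc ha hE0 hS1) (den_pos hc ha hS1))
  rw [div_le_div_iff₀ (den_pos hc ha hS1) (den_pos hc ha hS2)]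
  nlinarith [mul_nonneg (mul_nonneg hc.le ha.le) (mul_nonneg (sub_nonneg.2 h) (sub_nonneg.2 hE))]

lemma phi_le_zero {c a E S : ℝ} (hc : 0 < c) (ha : 0 < a) (hE0 : 0 < E) (hE : E ≤ 1)
    (hS : 0 ≤ S) : phi c a E S ≤ 0 := by
  apply Real.log_nonpos (by positivity)
  rw [div_le_one (den_pos hc ha hS)]
  nlinarith

lemma phi_nonneg {c a E S : ℝ} (hc : 0 < c) (ha : 0 < a) (hE : 1 ≤ E)
    (hS : 0 ≤ S) : 0 ≤ phi c a E S := by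
  apply Real.log_nonneg
  rw [le_div_iff₀ (den_pos hc ha hS)]
  nlinarith

lemma phi_le_log {c a E S : ℝ} (hc : 0 < c) (ha : 0 < a) (hE : 1 ≤ E)
    (hS : 0 ≤ S) : phi c a E S ≤ Real.log E := by
  apply Real.log_le_log (div_pos (num_pos hc ha (by linarith) hS) (den_pos hc ha hS))
  rw [div_le_iff₀ (den_pos hc ha hS)]
  nlinarith [mul_nonneg (mul_nonneg ha.le (sub_nonneg.2 hE)) (by linarith : (0:ℝ) ≤ 1 + S)]

lemma phi_ge_l {c a E S : ℝ} (hc : 0 < c) (ha : 0 < a) (hE : 0 < E)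
    (hS : 0 ≤ S) : Real.log (a / (c + a)) ≤ phi c a E S := by
  apply Real.log_le_log (by positivity)
  rw [div_le_div_iff₀ (by positivity) (den_pos hc ha hS)]
  nlinarith [mul_pos (mul_pos hc (by positivity : (0:ℝ) < c + a)) hE,
    mul_nonneg (mul_nonneg hc.le ha.le) hS]

lemma core (c a r T : ℝ) (hc : 0 < c) (ha : 0 < a) (hr : 0 < r) (hr1 : r ≤ 1)
    (hrT : r ≤ T) :
    2 * a / (c + 2 * a) ≤ a / (c * r + a * (1 + T)) + a * T / (c + a * (1 + T)) := by
  have hT : 0 < T := lt_of_lt_of_le hr hrT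
  have hP : 0 < c * r + a * (1 + T) := by positivity
  have hD : 0 < c + a * (1 + T) := by positivity
  have hC : 0 < c + 2 * a := by positivity
  rcases le_total 1 T with h1T | hT1
  · rw [div_add_div _ _ (ne_of_gt hP) (ne_of_gt hD), div_le_div_iff₀ hC (by positivity)]
    nlinarith [mul_nonneg (mul_nonneg ha.le (mul_nonneg hc.le (sub_nonneg.2 hr1))) hC.le,
      mul_nonneg (mul_nonneg ha.le (mul_nonneg hc.le (sub_nonneg.2 h1T))) hP.le]
  · have hP2 : 0 < (c + a) * T + a := by positivity
    have h1 : a / ((c + a) * T + a) ≤ a / (c * r + a * (1 + T)) := by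
      apply div_le_div_of_nonneg_left ha.le hP
      nlinarith
    refine le_trans ?_ (add_le_add h1 le_rfl)
    rw [div_add_div _ _ (ne_of_gt hP2) (ne_of_gt hD), div_le_div_iff₀ hC (by positivity)]
    nlinarith [mul_nonneg (mul_nonneg (mul_pos hc (by positivity : (0:ℝ) < c + a)).le
      (sq_nonneg (1 - T))) ha.le, sq_nonneg (1 - T), mul_pos hc (by positivity : (0:ℝ) < c + a)]

lemma diag (c a b T x y : ℝ) (hc : 0 < c) (ha : 0 < a) (hT : Real.exp b ≤ T)
    (hxy : x ≤ y) (hy : b + y ≤ 0) :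
    phi c a (Real.exp (b + y)) (T * Real.exp y) - phi c a (Real.exp (b + x)) (T * Real.exp x)
      ≤ (1 - 2 * a / (c + 2 * a)) * (y - x) := by
  have hT0 : 0 < T := lt_of_lt_of_le (Real.exp_pos b) hT
  set C1 : ℝ := c * Real.exp b + a * T with hC1
  have hC1pos : 0 < C1 := by positivity
  set k : ℝ := 1 - 2 * a / (c + 2 * a) with hk
  set f : ℝ → ℝ := fun z => Real.log (C1 * Real.exp z + a) - Real.log (c + a + a * T * Real.exp z)
    with hf
  have hnum : ∀ z : ℝ, 0 < C1 * Real.exp z + a := fun z => by positivity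
  have hden : ∀ z : ℝ, 0 < c + a + a * T * Real.exp z := fun z => by positivity
  have hfval : ∀ z : ℝ, phi c a (Real.exp (b + z)) (T * Real.exp z) = f z := by
    intro z
    have e1 : c * Real.exp (b + z) + a * (1 + T * Real.exp z) = C1 * Real.exp z + a := by
      rw [Real.exp_add, hC1]; ring
    have e2 : c + a * (1 + T * Real.exp z) = c + a + a * T * Real.exp z := by ring
    rw [phi, e1, e2, Real.log_div (hnum z).ne' (hden z).ne']
  have hf' : ∀ z : ℝ, HasDerivAt f
      (C1 * Real.exp z / (C1 * Real.exp z + a)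
        - a * T * Real.exp z / (c + a + a * T * Real.exp z)) z := by
    intro z
    have h1 : HasDerivAt (fun z => C1 * Real.exp z + a) (C1 * Real.exp z) z :=
      ((Real.hasDerivAt_exp z).const_mul C1).add_const a
    have h2 : HasDerivAt (fun z => c + a + a * T * Real.exp z) (a * T * Real.exp z) z :=
      ((Real.hasDerivAt_exp z).const_mul (a * T)).const_add (c + a)
    exact (h1.log (hnum z).ne').sub (h2.log (hden z).ne')
  set g : ℝ → ℝ := fun z => k * z - f z with hg
  have hg' : ∀ z : ℝ, HasDerivAt g
      (k - (C1 * Real.exp z / (C1 * Real.exp z + a)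
        - a * T * Real.exp z / (c + a + a * T * Real.exp z))) z := by
    intro z
    have h0 : HasDerivAt (fun z : ℝ => k * z) k z := by
      simpa using (hasDerivAt_id z).const_mul k
    exact h0.sub (hf' z)
  have hmono : MonotoneOn g (Set.Icc x y) := by
    apply monotoneOn_of_deriv_nonneg (convex_Icc x y)
    · exact fun z _ => (hg' z).differentiableAt.continuousAt.continuousWithinAt
    · intro z _
      exact (hg' z).differentiableAt.differentiableWithinAt
    · intro z hz
      rw [interior_Icc] at hz
      rw [(hg' z).deriv]
      have hbz : b + z ≤ 0 := by
        have := hz.2.le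
        linarith
      have hcore := core c a (Real.exp (b + z)) (T * Real.exp z) hc ha (Real.exp_pos _)
        (Real.exp_le_one_iff.2 hbz)
        (by rw [Real.exp_add]; exact mul_le_mul_of_nonneg_right hT (Real.exp_pos z).le)
      rw [show c * Real.exp (b + z) + a * (1 + T * Real.exp z) = C1 * Real.exp z + a by
          rw [Real.exp_add, hC1]; ring,
        show c + a * (1 + T * Real.exp z) = c + a + a * T * Real.exp z by ring,
        show a * (T * Real.exp z) = a * T * Real.exp z by ring] at hcore
      have e1 : C1 * Real.exp z / (C1 * Real.exp z + a) = 1 - a / (C1 * Real.exp z + a) := by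
        field_simp
        ring
      rw [e1, hk]
      linarith
  have hx : x ∈ Set.Icc x y := Set.left_mem_Icc.2 hxy
  have hy' : y ∈ Set.Icc x y := Set.right_mem_Icc.2 hxy
  have := hmono hx hy' hxy
  rw [hfval x, hfval y]
  simp only [hg] at this
  linarith

end abHMMaux



/-- The αβ-HMM log-belief-ratio mapping `F`, defined componentwise for `m = 1, …, M-1` by
`F_m(x) = log(((1 - αM)·exp(x_m) + α + α·Σ_n exp(x_n)) / (1 - αM + α + α·Σ_n exp(x_n)))`. -/
noncomputable def abHMM.F (α : ℝ) (M : ℕ) (x : Fin (M - 1) → ℝ) : Fin (M - 1) → ℝ :=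
  fun m => Real.log (((1 - α * M) * Real.exp (x m) + α + α * ∑ n, Real.exp (x n)) /
    (1 - α * M + α + α * ∑ n, Real.exp (x n)))

set_option maxHeartbeats 1000000 in
/-- Theorem 1, rate part: with `d̲ = min_m d_m`,
`x̄_0 = max{x̂_{1,0}, …, x̂_{N,0}, 0}` and
`λ = 1 - min{2α/(1-αM+2α), β d̲/(x̄_0 - log(α/(1-αM+α)) + β d̲)}`,
we have `0 ≤ λ < 1` and `‖x̂_i - x̂^∞‖_∞ ≤ λ ‖x̂_{i-1} - x̂^∞‖_∞` for every `i ≥ 1`,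
where `‖·‖` is the sup norm on the Pi type `Fin (M-1) → ℝ`. -/
theorem abHMM_reference_system_contraction_rate (M : ℕ) (hM : 2 ≤ M) (α β : ℝ)
    (hα : 0 < α) (hα' : α < 1 / M) (hβ : 0 < β)
    (d : Fin (M - 1) → ℝ) (hd : ∀ m, 0 < d m)
    (xinf : Fin (M - 1) → ℝ) (hfix : xinf = fun m => abHMM.F α M xinf m - β * d m)
    (xh : ℕ → Fin (M - 1) → ℝ)
    (hrec : ∀ i : ℕ, xh (i + 1) = fun m => abHMM.F α M (xh i) m - β * d m)
    (dlow : ℝ) (hdlow : dlow = sInf (Set.range d))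
    (x0bar : ℝ) (hx0bar : x0bar = max (sSup (Set.range (xh 0))) 0)
    (lam : ℝ)
    (hlam : lam = 1 - min (2 * α / (1 - α * M + 2 * α))
      (β * dlow / (x0bar - Real.log (α / (1 - α * M + α)) + β * dlow))) :
    0 ≤ lam ∧ lam < 1 ∧
      ∀ i : ℕ, ‖xh (i + 1) - xinf‖ ≤ lam * ‖xh i - xinf‖ := by
  haveI : Nonempty (Fin (M - 1)) := ⟨⟨0, by omega⟩⟩
  have hMpos : (0:ℝ) < (M:ℝ) := by
    have : (0:ℕ) < M := by omega
    exact_mod_cast this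
  set c : ℝ := 1 - α * M with hc_def
  have hc : 0 < c := by
    have h1 : α * M < 1 := by
      have := mul_lt_mul_of_pos_right hα' hMpos
      rwa [one_div, inv_mul_cancel₀ hMpos.ne'] at this
    simp only [hc_def]; linarith
  set el : ℝ := Real.log (α / (c + α)) with hel_def
  -- conversion of F to phi
  have hF : ∀ (x : Fin (M - 1) → ℝ) (m : Fin (M - 1)),
      abHMM.F α M x m = abHMMaux.phi c α (Real.exp (x m)) (∑ n, Real.exp (x n)) := by
    intro x m
    rw [abHMM.F, abHMMaux.phi]
    congr 1
    rw [hc_def]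
    ring
  have hSnn : ∀ (x : Fin (M - 1) → ℝ), 0 ≤ ∑ n, Real.exp (x n) :=
    fun x => Finset.sum_nonneg fun n _ => (Real.exp_pos _).le
  have hsingle : ∀ (x : Fin (M - 1) → ℝ) (m : Fin (M - 1)),
      Real.exp (x m) ≤ ∑ n, Real.exp (x n) :=
    fun x m => Finset.single_le_sum (fun n _ => (Real.exp_pos _).le) (Finset.mem_univ m)
  -- basic constants
  have hx0nn : 0 ≤ x0bar := by rw [hx0bar]; exact le_max_right _ _
  have hel_neg : el < 0 := by
    rw [hel_def]
    apply Real.log_neg (by positivity)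
    rw [div_lt_one (by positivity)]
    linarith
  have hW : 0 < x0bar - el := by linarith
  obtain ⟨m₀, hm₀⟩ : dlow ∈ Set.range d := by
    rw [hdlow]
    exact (Set.range_nonempty d).csInf_mem (Set.finite_range d)
  have hdlow_pos : 0 < dlow := hm₀ ▸ hd m₀
  have hdlow_le : ∀ m, dlow ≤ d m := fun m =>
    hdlow ▸ csInf_le (Set.finite_range d).bddBelow ⟨m, rfl⟩
  set k1 : ℝ := 2 * α / (c + 2 * α) with hk1_def
  set k2 : ℝ := β * dlow / (x0bar - el + β * dlow) with hk2_def
  have hden2 : 0 < x0bar - el + β * dlow := by positivity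
  have hk1_pos : 0 < k1 := by rw [hk1_def]; positivity
  have hk1_lt : k1 < 1 := by
    rw [hk1_def, div_lt_one (by positivity)]; linarith
  have hk2_pos : 0 < k2 := by rw [hk2_def]; positivity
  have hk2_lt : k2 < 1 := by
    rw [hk2_def, div_lt_one hden2]; linarith
  have hlam_eq : lam = 1 - min k1 k2 := hlam
  have hlam0 : 0 ≤ lam := by
    have := min_le_left k1 k2
    rw [hlam_eq]; linarith
  have hlam1 : lam < 1 := by
    have := lt_min hk1_pos hk2_pos
    rw [hlam_eq]; linarith
  refine ⟨hlam0, hlam1, ?_⟩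
  -- fixed point facts
  have hFv : ∀ m, abHMM.F α M xinf m = xinf m + β * d m := by
    intro m
    have := congrFun hfix m
    linarith
  have hv_le : ∀ m, xinf m ≤ -(β * d m) := by
    intro m
    have hle0 : xinf m ≤ 0 := by
      by_contra h
      push_neg at h
      have h1 : (1:ℝ) ≤ Real.exp (xinf m) := by
        rw [show (1:ℝ) = Real.exp 0 from Real.exp_zero.symm]
        exact Real.exp_le_exp.mpr h.le
      have h2 := abHMMaux.phi_le_log (S := ∑ n, Real.exp (xinf n)) hc hα h1 (hSnn xinf)
      rw [← hF, Real.log_exp, hFv m] at h2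
      nlinarith [mul_pos hβ (hd m)]
    have h1 : Real.exp (xinf m) ≤ 1 := Real.exp_le_one_iff.2 hle0
    have h2 := abHMMaux.phi_le_zero (S := ∑ n, Real.exp (xinf n)) hc hα (Real.exp_pos _) h1
      (hSnn xinf)
    rw [← hF, hFv m] at h2
    linarith
  have hv_ge : ∀ m, el - β * d m ≤ xinf m := by
    intro m
    have h2 := abHMMaux.phi_ge_l (E := Real.exp (xinf m)) (S := ∑ n, Real.exp (xinf n))
      hc hα (Real.exp_pos _) (hSnn xinf)
    rw [← hF, hFv m, ← hel_def] at h2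
    linarith
  -- orbit upper bound
  have hub : ∀ i m, xh i m ≤ x0bar := by
    intro i
    induction i with
    | zero =>
      intro m
      rw [hx0bar]
      exact le_max_of_le_left (le_csSup (Set.finite_range _).bddAbove ⟨m, rfl⟩)
    | succ i ih =>
      intro m
      have hstep : xh (i + 1) m = abHMM.F α M (xh i) m - β * d m := by
        rw [hrec i]
      rw [hstep]
      have hbd : 0 < β * d m := mul_pos hβ (hd m)
      rcases le_total (xh i m) 0 with h | h
      · have h2 := abHMMaux.phi_le_zero (S := ∑ n, Real.exp (xh i n)) hc hα (Real.exp_pos _)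
          (Real.exp_le_one_iff.2 h) (hSnn (xh i))
        rw [← hF] at h2
        linarith
      · have h1 : (1:ℝ) ≤ Real.exp (xh i m) := by
          rw [show (1:ℝ) = Real.exp 0 from Real.exp_zero.symm]
          exact Real.exp_le_exp.mpr h
        have h2 := abHMMaux.phi_le_log (S := ∑ n, Real.exp (xh i n)) hc hα h1 (hSnn (xh i))
        rw [← hF, Real.log_exp] at h2
        have := ih m
        linarith
  -- main contraction step
  intro i
  set δ : ℝ := ‖xh i - xinf‖ with hδ_def
  have hδnn : 0 ≤ δ := norm_nonneg _
  have hcoord : ∀ n, |xh i n - xinf n| ≤ δ := by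
    intro n
    have := norm_le_pi_norm (xh i - xinf) n
    simpa [Real.norm_eq_abs] using this
  have hlamδ : (1 - k1) * δ ≤ lam * δ ∧ (1 - k2) * δ ≤ lam * δ := by
    constructor
    · rw [hlam_eq]
      nlinarith [mul_le_mul_of_nonneg_right (min_le_left k1 k2) hδnn]
    · rw [hlam_eq]
      nlinarith [mul_le_mul_of_nonneg_right (min_le_right k1 k2) hδnn]
  rw [pi_norm_le_iff_of_nonneg (mul_nonneg hlam0 hδnn)]
  intro m
  have hcomp : (xh (i + 1) - xinf) m = abHMM.F α M (xh i) m - abHMM.F α M xinf m := by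
    simp only [Pi.sub_apply]
    rw [hrec i, hFv m]
    simp only
    ring
  rw [Real.norm_eq_abs, hcomp, abs_le]
  -- per-coordinate data
  set b : ℝ := xinf m with hb_def
  set T : ℝ := ∑ n, Real.exp (xinf n) with hT_def
  set Su : ℝ := ∑ n, Real.exp (xh i n) with hSu_def
  have hT_ge : Real.exp b ≤ T := hsingle xinf m
  have hT0 : 0 < T := lt_of_lt_of_le (Real.exp_pos b) hT_ge
  have hum_le : xh i m ≤ b + δ := by
    have := (abs_le.1 (hcoord m)).2
    linarith
  have hum_ge : b - δ ≤ xh i m := by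
    have := (abs_le.1 (hcoord m)).1
    linarith
  have hSuT : Su ≤ T * Real.exp δ := by
    rw [hSu_def, hT_def, Finset.sum_mul]
    apply Finset.sum_le_sum
    intro n _
    rw [← Real.exp_add]
    apply Real.exp_le_exp.2
    have := (abs_le.1 (hcoord n)).2
    linarith
  have hTSu : T * Real.exp (-δ) ≤ Su := by
    rw [hSu_def, hT_def, Finset.sum_mul]
    apply Finset.sum_le_sum
    intro n _
    rw [← Real.exp_add]
    apply Real.exp_le_exp.2
    have := (abs_le.1 (hcoord n)).1
    linarith
  have hb_neg : b < 0 := by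
    have := hv_le m
    have := mul_pos hβ (hd m)
    rw [hb_def]
    linarith
  constructor
  · -- lower bound : -(lam*δ) ≤ F u - F v
    have h1 : abHMMaux.phi c α (Real.exp (b + -δ)) (T * Real.exp (-δ)) ≤
        abHMM.F α M (xh i) m := by
      rw [hF]
      calc abHMMaux.phi c α (Real.exp (b + -δ)) (T * Real.exp (-δ))
          ≤ abHMMaux.phi c α (Real.exp (b + -δ)) Su :=
            abHMMaux.phi_mono_S hc hα (Real.exp_pos _)
              (Real.exp_le_one_iff.2 (by linarith)) (mul_pos hT0 (Real.exp_pos _)).le hTSu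
        _ ≤ abHMMaux.phi c α (Real.exp (xh i m)) Su :=
            abHMMaux.phi_mono_E hc hα (hSnn (xh i)) (Real.exp_pos _)
              (Real.exp_le_exp.2 (by linarith))
    have h2 := abHMMaux.diag c α b T (-δ) 0 hc hα hT_ge (by linarith) (by linarith)
    rw [hF xinf m, ← hb_def, ← hT_def]
    have e0 : abHMMaux.phi c α (Real.exp (b + 0)) (T * Real.exp 0) =
        abHMMaux.phi c α (Real.exp b) T := by
      rw [Real.exp_zero, add_zero, mul_one]
    rw [e0] at h2
    have hk1δ := hlamδ.1
    have : (1 - 2 * α / (c + 2 * α)) * (0 - -δ) = (1 - k1) * δ := by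
      rw [hk1_def]; ring
    rw [this] at h2
    linarith
  · -- upper bound : F u - F v ≤ lam*δ
    rcases le_total (b + δ) 0 with hcase | hcase
    · -- diag route
      have h1 : abHMM.F α M (xh i) m ≤
          abHMMaux.phi c α (Real.exp (b + δ)) (T * Real.exp δ) := by
        rw [hF]
        calc abHMMaux.phi c α (Real.exp (xh i m)) Su
            ≤ abHMMaux.phi c α (Real.exp (b + δ)) Su :=
              abHMMaux.phi_mono_E hc hα (hSnn (xh i)) (Real.exp_pos _)
                (Real.exp_le_exp.2 hum_le)
          _ ≤ abHMMaux.phi c α (Real.exp (b + δ)) (T * Real.exp δ) :=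
              abHMMaux.phi_mono_S hc hα (Real.exp_pos _)
                (Real.exp_le_one_iff.2 hcase) (hSnn (xh i)) hSuT
      have h2 := abHMMaux.diag c α b T 0 δ hc hα hT_ge hδnn hcase
      rw [hF xinf m, ← hb_def, ← hT_def]
      have e0 : abHMMaux.phi c α (Real.exp (b + 0)) (T * Real.exp 0) =
          abHMMaux.phi c α (Real.exp b) T := by
        rw [Real.exp_zero, add_zero, mul_one]
      rw [e0] at h2
      have hk1δ := hlamδ.1
      have : (1 - 2 * α / (c + 2 * α)) * (δ - 0) = (1 - k1) * δ := by
        rw [hk1_def]; ring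
      rw [this] at h2
      linarith
    · -- k2 route
      set Dm : ℝ := β * d m with hDm_def
      have hDm : 0 < Dm := mul_pos hβ (hd m)
      have hFu_le : abHMM.F α M (xh i) m ≤ min (b + δ) x0bar := by
        rcases le_total (xh i m) 0 with h | h
        · have h2 := abHMMaux.phi_le_zero (S := Su) hc hα (Real.exp_pos _)
            (Real.exp_le_one_iff.2 h) (hSnn (xh i))
          rw [← hF] at h2
          exact h2.trans (le_min hcase hx0nn)
        · have h1 : (1:ℝ) ≤ Real.exp (xh i m) := by
            rw [show (1:ℝ) = Real.exp 0 from Real.exp_zero.symm]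
            exact Real.exp_le_exp.mpr h
          have h2 := abHMMaux.phi_le_log (S := Su) hc hα h1 (hSnn (xh i))
          rw [← hF, Real.log_exp] at h2
          exact h2.trans (le_min hum_le (hub i m))
      have hFveq : abHMM.F α M xinf m = b + Dm := hFv m
      have hbge : el - Dm ≤ b := hv_ge m
      have hble : b ≤ -Dm := hv_le m
      set W : ℝ := x0bar - el with hW_def
      have hmid : min (b + δ) x0bar - b - Dm ≤ δ * W / (W + Dm) := by
        have hWDm : 0 < W + Dm := by positivity
        rcases le_total (b + δ) x0bar with hmin | hmin
        · rw [min_eq_left hmin, le_div_iff₀ hWDm]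
          have hδle : δ ≤ W + Dm := by linarith
          linarith [mul_nonneg hDm.le (sub_nonneg.2 hδle)]
        · rw [min_eq_right hmin, le_div_iff₀ hWDm]
          have hX1 : x0bar - b ≤ W + Dm := by linarith
          have hX2 : x0bar - b ≤ δ := by linarith
          have hX0 : 0 ≤ x0bar - b := by linarith
          linarith [mul_nonneg hDm.le (sub_nonneg.2 hX1),
            mul_nonneg hW.le (sub_nonneg.2 hX2)]
      have hmid2 : δ * W / (W + Dm) ≤ (1 - k2) * δ := by
        have h1 : δ * W / (W + Dm) ≤ δ * W / (W + β * dlow) := by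
          gcongr
          exact mul_le_mul_of_nonneg_left (hdlow_le m) hβ.le
        have h2 : δ * W / (W + β * dlow) = (1 - k2) * δ := by
          rw [hk2_def, hW_def]
          have hne : x0bar - el + β * dlow ≠ 0 := hden2.ne'
          field_simp
          ring
        linarith
      have := hlamδ.2
      have hFv_ge := hFveq
      linarith [hFu_le, hmid, hmid2]
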